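/- For every integer k ≥ 1, e^{−16k}·∑_{n=0}^{8k−1} (16k)^n/n! < 1/100. -/

import Mathlib

open Finset Real

lemma sum_le_of_two_mul_le (a : ℕ → ℝ) : ∀ m : ℕ, 0 ≤ a 0 →
    (∀ n < m, 2 * a n ≤ a (n + 1)) → ∑ n ∈ Finset.range m, a n ≤ a m := by
  intro m
  induction m with
  | zero => intro h0 _; simpa using h0
  | succ m ih =>
    intro h0 h
    rw [Finset.sum_range_succ]
    have h1 : ∑ n ∈ Finset.range m, a n ≤ a m :=
      ih h0 fun n hn => h n (hn.trans (Nat.lt_succ_self m))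
    have h2 : 2 * a m ≤ a (m + 1) := h m (Nat.lt_succ_self m)
    linarith

theorem poisson_lower_tail_lt (k : ℕ) (hk : 1 ≤ k) :
    Real.exp (-(16 * k : ℝ)) *
        ∑ n ∈ Finset.range (8 * k), (16 * (k : ℝ)) ^ n / (Nat.factorial n : ℝ) <
      1 / 100 := by
  have he9 : (2.7182818283 : ℝ) < Real.exp 1 := Real.exp_one_gt_d9
  rcases eq_or_lt_of_le hk with h1 | h2
  · -- k = 1
    subst h1
    have hsum : ∑ n ∈ Finset.range (8 * 1), (16 * ((1 : ℕ) : ℝ)) ^ n / (Nat.factorial n : ℝ)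
        = 5598127 / 63 := by
      simp [Finset.sum_range_succ, Nat.factorial]
      norm_num
    rw [hsum]
    have h16 : Real.exp (16 : ℝ) = Real.exp 1 ^ (16 : ℕ) := by
      rw [← Real.exp_nat_mul]; norm_num
    have hlb : (8885916 : ℝ) < Real.exp 1 ^ (16 : ℕ) := by
      calc (8885916 : ℝ) < 2.7182818283 ^ (16 : ℕ) := by norm_num
        _ < Real.exp 1 ^ (16 : ℕ) := by
            exact pow_lt_pow_left₀ he9 (by norm_num) (by norm_num)
    have : Real.exp (-(16 * ((1:ℕ):ℝ))) = (Real.exp 1 ^ (16:ℕ))⁻¹ := by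
      rw [← h16, ← Real.exp_neg]; norm_num
    rw [this]
    rw [inv_mul_lt_iff₀ (by positivity)]
    nlinarith [hlb]
  · -- k ≥ 2
    have hk2 : 2 ≤ k := h2
    have hxpos : (0:ℝ) < 16 * k := by positivity
    set x : ℝ := 16 * (k : ℝ) with hx
    have hS : ∑ n ∈ Finset.range (8 * k), x ^ n / (Nat.factorial n : ℝ)
        ≤ x ^ (8 * k) / (Nat.factorial (8 * k) : ℝ) := by
      apply sum_le_of_two_mul_le (fun n => x ^ n / (Nat.factorial n : ℝ))
      · simp [Nat.factorial]
      · intro n hn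
        have hsplit : x ^ (n + 1) / (Nat.factorial (n + 1) : ℝ)
            = (x / (n + 1)) * (x ^ n / (Nat.factorial n : ℝ)) := by
          rw [pow_succ, Nat.factorial_succ]
          push_cast
          field_simp
        rw [hsplit]
        have hratio : (2 : ℝ) ≤ x / (n + 1) := by
          rw [le_div_iff₀ (by positivity)]
          have : (n : ℝ) + 1 ≤ 8 * k := by
            have := Nat.succ_le_of_lt hn
            exact_mod_cast this
          rw [hx]
          push_cast
          nlinarith
        have hnn : (0:ℝ) ≤ x ^ n / (Nat.factorial n : ℝ) := by positivity
        nlinarith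
    have hfac : ((8 * k : ℕ) : ℝ) ^ (8 * k) / (Nat.factorial (8 * k) : ℝ)
        ≤ Real.exp (8 * k) := by
      have := Real.pow_div_factorial_le_exp ((8 * k : ℕ) : ℝ) (by positivity) (8 * k)
      simpa using this
    have hxsplit : x ^ (8 * k) = 2 ^ (8 * k) * ((8 * k : ℕ) : ℝ) ^ (8 * k) := by
      rw [← mul_pow, hx]; push_cast; ring_nf
    have key : Real.exp (-(16 * k : ℝ)) *
        ∑ n ∈ Finset.range (8 * k), x ^ n / (Nat.factorial n : ℝ)
        ≤ (2 / Real.exp 1) ^ (8 * k) := by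
      have e1 : Real.exp (-(16 * k : ℝ)) * (x ^ (8*k) / (Nat.factorial (8*k) : ℝ))
          ≤ Real.exp (-(16 * k : ℝ)) * (2 ^ (8 * k) * Real.exp (8 * k)) := by
        apply mul_le_mul_of_nonneg_left _ (Real.exp_nonneg _)
        rw [hxsplit, mul_div_assoc]
        apply mul_le_mul_of_nonneg_left _ (by positivity)
        exact hfac
      have e2 : Real.exp (-(16 * k : ℝ)) * (2 ^ (8 * k) * Real.exp (8 * k))
          = (2 / Real.exp 1) ^ (8 * k) := by
        have hc : (((8 * k : ℕ)) : ℝ) = 8 * (k : ℝ) := by push_cast; ring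
        rw [div_pow, Real.exp_one_pow, hc, eq_div_iff (Real.exp_ne_zero _)]
        rw [show Real.exp (-(16 * (k:ℝ))) * (2 ^ (8 * k) * Real.exp (8 * (k:ℝ))) *
              Real.exp (8 * (k:ℝ))
            = 2 ^ (8 * k) * (Real.exp (-(16 * (k:ℝ))) * Real.exp (8 * (k:ℝ)) *
              Real.exp (8 * (k:ℝ))) from by ring,
          ← Real.exp_add, ← Real.exp_add]
        norm_num
        ring
      calc Real.exp (-(16 * k : ℝ)) * ∑ n ∈ Finset.range (8 * k), x ^ n / (Nat.factorial n : ℝ)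
          ≤ Real.exp (-(16 * k : ℝ)) * (x ^ (8*k) / (Nat.factorial (8*k) : ℝ)) :=
            mul_le_mul_of_nonneg_left hS (Real.exp_nonneg _)
        _ ≤ Real.exp (-(16 * k : ℝ)) * (2 ^ (8 * k) * Real.exp (8 * k)) := e1
        _ = (2 / Real.exp 1) ^ (8 * k) := e2
    refine lt_of_le_of_lt key ?_
    have hbase : (0:ℝ) ≤ 2 / Real.exp 1 := by positivity
    have hbase1 : 2 / Real.exp 1 ≤ 1 := by
      rw [div_le_one (Real.exp_pos 1)]
      linarith
    have hmono : (2 / Real.exp 1) ^ (8 * k) ≤ (2 / Real.exp 1) ^ 16 :=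
      pow_le_pow_of_le_one hbase hbase1 (by omega)
    refine lt_of_le_of_lt hmono ?_
    rw [div_pow, div_lt_div_iff₀ (by positivity) (by norm_num)]
    have : (2.7182818283 : ℝ) ^ (16:ℕ) < Real.exp 1 ^ (16:ℕ) :=
      pow_lt_pow_left₀ he9 (by norm_num) (by norm_num)
    nlinarith [this]
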